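/- Let A be a finite nonempty alphabet, d ≥ 1, and k ≥ 2. Suppose L = M₁ \ (M₂ \ (M₃ \ ⋯ \ M_k)⋯) is an iterated difference of k languages M₁, …, M_k over A, each of which is Π₁_d[N]-definable. Then ceil_d L \ L can be written as an iterated difference M'₁ \ (M'₂ \ ⋯ \ M'_{k−1})⋯) of k−1 languages, each of which is Π₁_d[N]-definable. -/

import Mathlib

def Pi1NDefinable (A : Type*) (d : ℕ) (L : Set (List A)) : Prop :=
  ∃ N : (Fin d → A) → (Fin d → ℕ) → ℕ → Prop,
    ∀ w : List A, w ∈ L ↔ ∀ i : Fin d → Fin w.length,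
      N (fun j => w.get (i j)) (fun j => (i j : ℕ)) w.length

def ceil (A : Type*) (d : ℕ) (L : Set (List A)) : Set (List A) :=
  {w | ∀ i : Fin d → Fin w.length, ∃ v ∈ L, ∃ h : v.length = w.length,
    ∀ j : Fin d, v.get (Fin.cast h.symm (i j)) = w.get (i j)}

def iterDiff {α : Type*} : List (Set α) → Set α
  | [] => ∅
  | s :: rest => s \ iterDiff rest

lemma pi1_inter {A : Type*} {d : ℕ} {L₁ L₂ : Set (List A)}
    (h₁ : Pi1NDefinable A d L₁) (h₂ : Pi1NDefinable A d L₂) :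
    Pi1NDefinable A d (L₁ ∩ L₂) := by
  obtain ⟨N₁, hN₁⟩ := h₁; obtain ⟨N₂, hN₂⟩ := h₂
  refine ⟨fun a p n => N₁ a p n ∧ N₂ a p n, fun w => ?_⟩
  simp [Set.mem_inter_iff, hN₁ w, hN₂ w, forall_and]

lemma pi1_ceil (A : Type*) (d : ℕ) (L : Set (List A)) :
    Pi1NDefinable A d (ceil A d L) := by
  refine ⟨fun a p n => ∃ v ∈ L, ∃ h : v.length = n,
      ∀ j : Fin d, ∃ hp : p j < v.length, v.get ⟨p j, hp⟩ = a j, fun w => ?_⟩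
  constructor
  · intro hw i
    obtain ⟨v, hv, h, hg⟩ := hw i
    exact ⟨v, hv, h, fun j => ⟨by rw [h]; exact (i j).isLt, hg j⟩⟩
  · intro hw i
    obtain ⟨v, hv, h, hg⟩ := hw i
    refine ⟨v, hv, h, fun j => ?_⟩
    obtain ⟨hp, he⟩ := hg j
    exact he

lemma subset_ceil {A : Type*} (d : ℕ) (L : Set (List A)) : L ⊆ ceil A d L :=
  fun w hw _ => ⟨w, hw, rfl, fun _ => rfl⟩

lemma ceil_mono {A : Type*} (d : ℕ) {L₁ L₂ : Set (List A)} (h : L₁ ⊆ L₂) :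
    ceil A d L₁ ⊆ ceil A d L₂ := by
  intro w hw i
  obtain ⟨v, hv, hl, hg⟩ := hw i
  exact ⟨v, h hv, hl, hg⟩

lemma ceil_subset_self {A : Type*} {d : ℕ} {L : Set (List A)}
    (h : Pi1NDefinable A d L) : ceil A d L ⊆ L := by
  obtain ⟨N, hN⟩ := h
  intro w hw
  rw [hN]
  intro i
  obtain ⟨v, hv, hlen, hg⟩ := hw i
  have key := (hN v).mp hv (fun j => Fin.cast hlen.symm (i j))
  have e1 : (fun j => v.get (Fin.cast hlen.symm (i j))) = fun j => w.get (i j) :=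
    funext hg
  rw [e1] at key
  simpa only [hlen, Fin.val_cast] using key

theorem ceil_diff_shorter_chain (A : Type) [Fintype A] [Nonempty A] (d k : ℕ)
    (hd : 1 ≤ d) (hk : 2 ≤ k) (M : List (Set (List A))) (hlen : M.length = k)
    (hdef : ∀ s ∈ M, Pi1NDefinable A d s) (L : Set (List A)) (hL : L = iterDiff M) :
    ∃ M' : List (Set (List A)), M'.length = k - 1 ∧
      (∀ s ∈ M', Pi1NDefinable A d s) ∧ ceil A d L \ L = iterDiff M' := by
  obtain ⟨m₁, M₁, rfl⟩ : ∃ a t, M = a :: t := by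
    cases M with
    | nil => simp at hlen; omega
    | cons a t => exact ⟨a, t, rfl⟩
  obtain ⟨m₂, t, rfl⟩ : ∃ a t', M₁ = a :: t' := by
    cases M₁ with
    | nil => simp at hlen; omega
    | cons a t => exact ⟨a, t, rfl⟩
  simp only [List.length_cons] at hlen
  refine ⟨(ceil A d L ∩ m₂) :: t, by simp; omega, ?_, ?_⟩
  · intro s hs
    rcases List.mem_cons.mp hs with rfl | hs
    · exact pi1_inter (pi1_ceil A d L) (hdef m₂ (by simp))
    · exact hdef s (by simp [hs])
  · have hLm₁ : L ⊆ m₁ := by rw [hL]; exact Set.diff_subset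
    have hsub : ceil A d L ⊆ m₁ :=
      fun w hw => ceil_subset_self (hdef m₁ (by simp)) (ceil_mono d hLm₁ hw)
    have hmemL : ∀ x, x ∈ L ↔ x ∈ m₁ ∧ ¬(x ∈ m₂ ∧ x ∉ iterDiff t) := by
      intro x; rw [hL]; simp [iterDiff, Set.mem_diff]
    ext w
    simp only [Set.mem_diff, iterDiff, Set.mem_inter_iff, hmemL w]
    have h1 := @hsub w
    tauto
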